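/- Let G be a group and let N⁻, M, N⁺ be subgroups of G giving a unique decomposition in G, and suppose moreover that M normalizes both N⁻ and N⁺. Let A and B be subgroups of G, each having an Iwahori decomposition with respect to (N⁻, M, N⁺), and assume A ∩ N⁺ ⊆ B. Then for every g ∈ G the following are equivalent: (i) g = a * b for some a ∈ A and b ∈ B, and also g = m * n for some m ∈ M and n ∈ N⁺; (ii) g = a₀ * b₀ * b₊ for some a₀ ∈ A ∩ M, b₀ ∈ B ∩ M and b₊ ∈ B ∩ N⁺. -/
import Mathlib


/-- Subsets `Nm`, `M`, `Np` of a group `G` give a *unique decomposition* in `G`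
if the multiplication map `(a, b, c) ↦ a * b * c` from `Nm × M × Np` to `G` is
injective. -/
def UniqueDecomposition {G : Type*} [Group G] (Nm M Np : Set G) : Prop :=
  ∀ a₁ ∈ Nm, ∀ b₁ ∈ M, ∀ c₁ ∈ Np, ∀ a₂ ∈ Nm, ∀ b₂ ∈ M, ∀ c₂ ∈ Np,
    a₁ * b₁ * c₁ = a₂ * b₂ * c₂ → a₁ = a₂ ∧ b₁ = b₂ ∧ c₁ = c₂

/-- A subgroup `H` of `G` has an *Iwahori decomposition* with respect to
`(Nm, M, Np)` if every element of `H` is a product of elements of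
`H ∩ Nm`, `H ∩ M` and `H ∩ Np` (in this order). -/
def HasIwahoriDecomposition {G : Type*} [Group G] (H : Subgroup G)
    (Nm M Np : Set G) : Prop :=
  ∀ h ∈ H, ∃ hm ∈ (H : Set G) ∩ Nm, ∃ h₀ ∈ (H : Set G) ∩ M,
    ∃ hp ∈ (H : Set G) ∩ Np, h = hm * h₀ * hp

/-- Group-theoretic content of Lemma C.8: if `A` and `B` have Iwahori
decompositions with respect to `(N⁻, M, N⁺)`, `M` normalizes `N⁻` and `N⁺`,
and `A ∩ N⁺ ⊆ B`, then an element of `G` lies in `A * B` and in `M * N⁺`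
simultaneously if and only if it is of the form `a₀ * b₀ * b₊` with
`a₀ ∈ A ∩ M`, `b₀ ∈ B ∩ M` and `b₊ ∈ B ∩ N⁺`. -/
theorem mem_mul_inter_levi_decomposition
    {G : Type*} [Group G] (Nm M Np A B : Subgroup G)
    (hud : UniqueDecomposition (Nm : Set G) (M : Set G) (Np : Set G))
    (hnorm_m : ∀ m ∈ M, ∀ n ∈ Nm, m * n * m⁻¹ ∈ Nm)
    (hnorm_p : ∀ m ∈ M, ∀ n ∈ Np, m * n * m⁻¹ ∈ Np)
    (hA : HasIwahoriDecomposition A (Nm : Set G) (M : Set G) (Np : Set G))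
    (hB : HasIwahoriDecomposition B (Nm : Set G) (M : Set G) (Np : Set G))
    (hAB : (A : Set G) ∩ (Np : Set G) ⊆ (B : Set G))
    (g : G) :
    ((∃ a ∈ A, ∃ b ∈ B, g = a * b) ∧ (∃ m ∈ M, ∃ n ∈ Np, g = m * n)) ↔
      (∃ a₀ ∈ (A : Set G) ∩ (M : Set G), ∃ b₀ ∈ (B : Set G) ∩ (M : Set G),
        ∃ bp ∈ (B : Set G) ∩ (Np : Set G), g = a₀ * b₀ * bp) := by
  constructor
  · rintro ⟨⟨a, haA, b, hbB, rfl⟩, m, hmM, n, hnNp, hg2⟩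
    obtain ⟨bm, ⟨hbmB, hbmNm⟩, b₀, ⟨hb₀B, hb₀M⟩, bp, ⟨hbpB, hbpNp⟩, hbdec⟩ := hB b hbB
    obtain ⟨cm, ⟨hcmA, hcmNm⟩, c₀, ⟨hc₀A, hc₀M⟩, cp, ⟨hcpA, hcpNp⟩, hadec⟩ :=
      hA a⁻¹ (inv_mem haA)
    -- key equality from unique decomposition
    set m' : G := m * b₀⁻¹ with hm'
    set n' : G := b₀ * (n * bp⁻¹) * b₀⁻¹ with hn'
    have hm'M : m' ∈ M := mul_mem hmM (inv_mem hb₀M)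
    have hn'Np : n' ∈ Np := by
      have := hnorm_p b₀ hb₀M (n * bp⁻¹) (mul_mem hnNp (inv_mem hbpNp))
      simpa [hn'] using this
    have key : bm = cm * (c₀ * m') * ((m'⁻¹ * cp * m') * n') := by
      have h1 : a * bm = m' * n' := by
        have : a * (bm * b₀ * bp) = m * n := hg2.symm ▸ (by rw [hbdec])
        have h2 : a * bm = m * n * bp⁻¹ * b₀⁻¹ := by
          rw [← this]; group
        rw [h2, hm', hn']; group
      have h3 : bm = a⁻¹ * (m' * n') := by rw [← h1]; group
      rw [h3, hadec]; group
    have hud' := hud bm hbmNm 1 (one_mem M) 1 (one_mem Np)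
      cm hcmNm (c₀ * m') (mul_mem hc₀M hm'M)
      ((m'⁻¹ * cp * m') * n')
      (mul_mem (by simpa using hnorm_p m'⁻¹ (inv_mem hm'M) cp hcpNp) hn'Np)
      (by simpa using key)
    obtain ⟨-, h₀, hplus⟩ := hud'
    have hm'eq : m' = c₀⁻¹ := eq_inv_of_mul_eq_one_right h₀.symm
    have hn'eq : n' = m'⁻¹ * cp⁻¹ * m' := by
      have h3 : n' = (m'⁻¹ * cp * m')⁻¹ := eq_inv_of_mul_eq_one_right hplus.symm
      rw [h3]; group
    -- now rewrite g
    set e : G := c₀ * cp⁻¹ * c₀⁻¹ with he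
    have heA : e ∈ A := mul_mem (mul_mem hc₀A (inv_mem hcpA)) (inv_mem hc₀A)
    have heNp : e ∈ Np := hnorm_p c₀ hc₀M cp⁻¹ (inv_mem hcpNp)
    have heB : e ∈ B := hAB ⟨heA, heNp⟩
    have hfNp : b₀⁻¹ * e * b₀ ∈ Np := by
      simpa using hnorm_p b₀⁻¹ (inv_mem hb₀M) e heNp
    have hfB : b₀⁻¹ * e * b₀ ∈ B := mul_mem (mul_mem (inv_mem hb₀B) heB) hb₀B
    refine ⟨c₀⁻¹, ⟨inv_mem hc₀A, inv_mem hc₀M⟩, b₀, ⟨hb₀B, hb₀M⟩,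
      (b₀⁻¹ * e * b₀) * bp, ⟨mul_mem hfB hbpB, mul_mem hfNp hbpNp⟩, ?_⟩
    have habm : a * bm = cp⁻¹ * c₀⁻¹ := by
      have h1 : a * bm = m' * n' := by
        have : a * (bm * b₀ * bp) = m * n := hg2.symm ▸ (by rw [hbdec])
        have h2 : a * bm = m * n * bp⁻¹ * b₀⁻¹ := by
          rw [← this]; group
        rw [h2, hm', hn']; group
      rw [h1, hn'eq, hm'eq]; group
    calc a * b = (a * bm) * b₀ * bp := by rw [hbdec]; group
      _ = cp⁻¹ * c₀⁻¹ * b₀ * bp := by rw [habm]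
      _ = c₀⁻¹ * b₀ * ((b₀⁻¹ * e * b₀) * bp) := by rw [he]; group
  · rintro ⟨a₀, ⟨ha₀A, ha₀M⟩, b₀, ⟨hb₀B, hb₀M⟩, bp, ⟨hbpB, hbpNp⟩, rfl⟩
    exact ⟨⟨a₀, ha₀A, b₀ * bp, mul_mem hb₀B hbpB, by group⟩,
      a₀ * b₀, mul_mem ha₀M hb₀M, bp, hbpNp, by group⟩
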